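/- arXiv:2004.03448 — 2 statements merged into one kernel-verified Lean document; each statement's English description precedes it below -/
import Mathlib

section
/- Define r₀(t, χ) = r(√t, χ) = Φ(-χ - √t) + Φ(-χ + √t) for t ≥ 0. If 0 < χ < √3, then r₀(·, χ) is strictly concave on an interval near 0; more precisely, the second derivative of t ↦ r₀(t, χ) at t = 0⁺ is negative when χ² < 3. -/
open MeasureTheory ProbabilityTheory Real Set Filter

/-- Standard normal CDF. -/
noncomputable def Phi (x : ℝ) : ℝ := (gaussianReal 0 1 (Set.Iic x)).toReal

/-- Non-coverage function `r(b, χ) = Φ(-χ-b) + Φ(-χ+b)`. -/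
noncomputable def r (b χ : ℝ) : ℝ := Phi (-χ - b) + Phi (-χ + b)

/-- `r₀(t, χ) = r(√t, χ)`. -/
noncomputable def r0 (t χ : ℝ) : ℝ := r (Real.sqrt t) χ

/-- Standard normal density. -/
noncomputable def phi (x : ℝ) : ℝ := (Real.sqrt (2*π))⁻¹ * Real.exp (-x^2/2)

lemma gpdf_eq : gaussianPDFReal 0 1 = phi := by
  ext x; simp [gaussianPDFReal, phi]

lemma phi_cont : Continuous phi := by unfold phi; continuity

lemma phi_pos (x : ℝ) : 0 < phi x := by unfold phi; positivity

lemma Phi_eq (x : ℝ) : Phi x = Phi 0 + ∫ u in (0:ℝ)..x, phi u := by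
  have hint : Integrable phi := by rw [← gpdf_eq]; exact integrable_gaussianPDFReal 0 1
  have h : ∀ y : ℝ, Phi y = ∫ u in Iic y, phi u := by
    intro y
    rw [Phi, gaussianReal_apply_eq_integral 0 one_ne_zero, gpdf_eq,
      ENNReal.toReal_ofReal (integral_nonneg fun u => (phi_pos u).le)]
  rw [h, h, ← intervalIntegral.integral_Iic_sub_Iic hint.integrableOn hint.integrableOn]
  ring

lemma hasDerivAt_Phi (x : ℝ) : HasDerivAt Phi (phi x) x := by
  have : Phi = fun y => Phi 0 + ∫ u in (0:ℝ)..y, phi u := funext Phi_eq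
  rw [this]
  exact ((phi_cont.integral_hasStrictDerivAt 0 x).hasDerivAt).const_add _

lemma hasDerivAt_phi (x : ℝ) : HasDerivAt phi (-x * phi x) x := by
  have h1 : HasDerivAt (fun y : ℝ => -y^2/2) (-x) x := by
    have := ((hasDerivAt_pow 2 x).neg).div_const 2
    refine this.congr_deriv ?_; norm_num; ring
  have h3 := (h1.exp).const_mul (Real.sqrt (2*π))⁻¹
  refine h3.congr_deriv ?_
  unfold phi; ring

lemma phi_neg (x : ℝ) : phi (-x) = phi x := by unfold phi; rw [neg_sq]

lemma hasDerivAt_r (χ b : ℝ) :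
    HasDerivAt (fun b => r b χ) (phi (b - χ) - phi (b + χ)) b := by
  have h1 : HasDerivAt (fun b : ℝ => -χ - b) (-1) b := (hasDerivAt_id b).const_sub (-χ)
  have h2 : HasDerivAt (fun b : ℝ => -χ + b) 1 b := (hasDerivAt_id b).const_add (-χ)
  have hA := (hasDerivAt_Phi (-χ - b)).comp b h1
  have hB := (hasDerivAt_Phi (-χ + b)).comp b h2
  have := hA.add hB
  have he : phi (-χ - b) * (-1) + phi (-χ + b) * 1 = phi (b - χ) - phi (b + χ) := by
    rw [show -χ - b = -(b + χ) by ring, show -χ + b = -(χ - b) by ring, phi_neg, phi_neg,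
      show χ - b = -(b - χ) by ring, phi_neg]
    ring
  rw [he] at this
  exact this

/-- First derivative of `t ↦ r0 t χ` for `t > 0`, in closed form. -/
noncomputable def D1 (χ t : ℝ) : ℝ :=
  (phi (Real.sqrt t - χ) - phi (Real.sqrt t + χ)) / (2 * Real.sqrt t)

lemma hasDerivAt_r0 (χ : ℝ) {t : ℝ} (ht : 0 < t) :
    HasDerivAt (fun s => r0 s χ) (D1 χ t) t := by
  have hs := Real.hasDerivAt_sqrt ht.ne'
  have := (hasDerivAt_r χ (Real.sqrt t)).comp t hs
  refine this.congr_deriv ?_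
  unfold D1
  rw [one_div, div_eq_mul_inv]

/-- Second derivative of `t ↦ r0 t χ` for `t > 0`, as a function of `b = √t`. -/
noncomputable def G (χ b : ℝ) : ℝ :=
  (b * ((b + χ) * phi (b + χ) - (b - χ) * phi (b - χ)) - (phi (b - χ) - phi (b + χ))) / (4 * b ^ 3)

lemma hasDerivAt_D1 (χ : ℝ) {t : ℝ} (ht : 0 < t) :
    HasDerivAt (D1 χ) (G χ (Real.sqrt t)) t := by
  have hb : 0 < Real.sqrt t := Real.sqrt_pos.mpr ht
  have hs := Real.hasDerivAt_sqrt ht.ne'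
  have hm : HasDerivAt (fun s : ℝ => Real.sqrt s - χ) (1 / (2 * Real.sqrt t)) t := hs.sub_const χ
  have hp : HasDerivAt (fun s : ℝ => Real.sqrt s + χ) (1 / (2 * Real.sqrt t)) t := hs.add_const χ
  have hf : HasDerivAt (fun s : ℝ => phi (Real.sqrt s - χ) - phi (Real.sqrt s + χ))
      ((-(Real.sqrt t - χ) * phi (Real.sqrt t - χ)) * (1 / (2 * Real.sqrt t))
        - (-(Real.sqrt t + χ) * phi (Real.sqrt t + χ)) * (1 / (2 * Real.sqrt t))) t :=
    ((hasDerivAt_phi _).comp t hm).sub ((hasDerivAt_phi _).comp t hp)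
  have hg : HasDerivAt (fun s : ℝ => 2 * Real.sqrt s) (2 * (1 / (2 * Real.sqrt t))) t :=
    hs.const_mul 2
  have hg0 : 2 * Real.sqrt t ≠ 0 := by positivity
  have := hf.div hg hg0
  refine this.congr_deriv ?_
  unfold G
  field_simp
  ring

lemma deriv_deriv_r0 (χ : ℝ) {t : ℝ} (ht : 0 < t) :
    deriv (deriv (fun s => r0 s χ)) t = G χ (Real.sqrt t) := by
  have h1 : deriv (fun s => r0 s χ) =ᶠ[nhds t] D1 χ := by
    filter_upwards [Ioi_mem_nhds ht] with s hs
    exact (hasDerivAt_r0 χ hs).deriv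
  rw [h1.deriv_eq]
  exact (hasDerivAt_D1 χ ht).deriv

lemma tendsto_sinh_div :
    Tendsto (fun x : ℝ => Real.sinh x / x) (nhdsWithin 0 {(0:ℝ)}ᶜ) (nhds 1) := by
  have h := (Real.hasDerivAt_sinh 0)
  rw [hasDerivAt_iff_tendsto_slope] at h
  simpa [slope_fun_def, Real.sinh_zero, Real.cosh_zero, div_eq_inv_mul] using h

lemma lim1 {χ : ℝ} (hχ : 0 < χ) :
    Tendsto (fun b : ℝ => Real.sinh (b * χ) / b) (nhdsWithin 0 (Set.Ioi 0)) (nhds χ) := by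
  have hm : Tendsto (fun b : ℝ => b * χ) (nhdsWithin 0 (Set.Ioi 0))
      (nhdsWithin 0 {(0:ℝ)}ᶜ) := by
    rw [tendsto_nhdsWithin_iff]
    constructor
    · have : Tendsto (fun b : ℝ => b * χ) (nhds 0) (nhds 0) := by
        simpa using (continuous_mul_right χ).tendsto 0
      exact this.mono_left nhdsWithin_le_nhds
    · filter_upwards [self_mem_nhdsWithin] with b hb
      exact (mul_pos hb hχ).ne'
  have h := (tendsto_sinh_div.comp hm).mul_const χ
  rw [one_mul] at h
  refine h.congr' ?_
  filter_upwards [self_mem_nhdsWithin] with b hb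
  have hb0 : b ≠ 0 := ne_of_gt hb
  simp only [Function.comp_apply]
  field_simp

lemma lim2 {χ : ℝ} (hχ : 0 < χ) :
    Tendsto (fun b : ℝ => (b * χ * Real.cosh (b * χ) - Real.sinh (b * χ)) / b ^ 3)
      (nhdsWithin 0 (Set.Ioi 0)) (nhds (χ ^ 3 / 3)) := by
  have hf' : ∀ b : ℝ, HasDerivAt (fun b : ℝ => b * χ * Real.cosh (b * χ) - Real.sinh (b * χ))
      (b * χ ^ 2 * Real.sinh (b * χ)) b := by
    intro b
    have hbc : HasDerivAt (fun b : ℝ => b * χ) χ b := by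
      simpa using (hasDerivAt_id b).mul_const χ
    have hcosh := (Real.hasDerivAt_cosh (b * χ)).comp b hbc
    have hsinh := (Real.hasDerivAt_sinh (b * χ)).comp b hbc
    have := (hbc.mul hcosh).sub hsinh
    simp only [Function.comp_def] at this
    refine this.congr_deriv ?_
    ring
  have hg' : ∀ b : ℝ, HasDerivAt (fun b : ℝ => b ^ 3) (3 * b ^ 2) b := by
    intro b; simpa using hasDerivAt_pow 3 b
  have hdiv : Tendsto (fun b : ℝ => (b * χ ^ 2 * Real.sinh (b * χ)) / (3 * b ^ 2))
      (nhdsWithin 0 (Set.Ioi 0)) (nhds (χ ^ 3 / 3)) := by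
    have h := (lim1 hχ).mul_const (χ ^ 2 / 3)
    have he : χ * (χ ^ 2 / 3) = χ ^ 3 / 3 := by ring
    rw [he] at h
    refine h.congr' ?_
    filter_upwards [self_mem_nhdsWithin] with b hb
    have hb0 : b ≠ 0 := ne_of_gt hb
    field_simp
  exact HasDerivAt.lhopital_zero_right_on_Ioo one_pos
    (fun x _ => hf' x) (fun x _ => hg' x)
    (fun x hx => by have := hx.1; positivity)
    (by
      have : Tendsto (fun b : ℝ => b * χ * Real.cosh (b * χ) - Real.sinh (b * χ))
          (nhds 0) (nhds 0) := by
        have hc : Continuous fun b : ℝ => b * χ * Real.cosh (b * χ) - Real.sinh (b * χ) := by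
          continuity
        simpa using hc.tendsto 0
      exact this.mono_left nhdsWithin_le_nhds)
    (by
      have : Tendsto (fun b : ℝ => b ^ 3) (nhds (0:ℝ)) (nhds 0) := by
        simpa using (continuous_pow 3).tendsto (0:ℝ)
      exact this.mono_left nhdsWithin_le_nhds)
    hdiv

lemma phi_shift_add (χ b : ℝ) : phi (b + χ) = phi χ * Real.exp (-b^2/2) * Real.exp (-(b*χ)) := by
  simp only [phi, mul_assoc, ← Real.exp_add]
  congr 1
  ring_nf

lemma phi_shift_sub (χ b : ℝ) : phi (b - χ) = phi χ * Real.exp (-b^2/2) * Real.exp (b*χ) := by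
  simp only [phi, mul_assoc, ← Real.exp_add]
  congr 1
  ring_nf

lemma G_eq {χ b : ℝ} (hb : 0 < b) :
    G χ b = phi χ * Real.exp (-b^2/2) *
      ((b * χ * Real.cosh (b * χ) - Real.sinh (b * χ)) / b ^ 3 - Real.sinh (b * χ) / b) / 2 := by
  rw [G, phi_shift_add, phi_shift_sub, Real.cosh_eq, Real.sinh_eq]
  have hb0 : b ≠ 0 := ne_of_gt hb
  field_simp
  ring

lemma limG {χ : ℝ} (hχ : 0 < χ) :
    Tendsto (fun b : ℝ => G χ b) (nhdsWithin 0 (Set.Ioi 0))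
      (nhds (χ * (χ ^ 2 - 3) * phi χ / 6)) := by
  have hexp : Tendsto (fun b : ℝ => Real.exp (-b^2/2)) (nhdsWithin 0 (Set.Ioi 0)) (nhds 1) := by
    have hc : Continuous fun b : ℝ => Real.exp (-b^2/2) := by continuity
    exact (hc.tendsto' 0 1 (by norm_num)).mono_left nhdsWithin_le_nhds
  have h := (((tendsto_const_nhds (x := phi χ)).mul hexp).mul
    ((lim2 hχ).sub (lim1 hχ))).div_const 2
  have he : phi χ * 1 * (χ ^ 3 / 3 - χ) / 2 = χ * (χ ^ 2 - 3) * phi χ / 6 := by ring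
  rw [he] at h
  refine h.congr' ?_
  filter_upwards [self_mem_nhdsWithin] with b hb
  exact (G_eq hb).symm

/-- If `0 < χ` and `χ² < 3`, then `t ↦ r₀(t, χ)` is strictly concave on an interval near
`0`, and its second derivative has a negative right-limit at `t = 0`. -/
theorem r0_strictConcave_near_zero (χ : ℝ) (hχ : 0 < χ) (h3 : χ ^ 2 < 3) :
    (∃ ε > (0 : ℝ), StrictConcaveOn ℝ (Set.Icc 0 ε) (fun t => r0 t χ)) ∧
    ∃ L < (0 : ℝ), Filter.Tendsto (fun t => deriv (deriv (fun s => r0 s χ)) t)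
      (nhdsWithin 0 (Set.Ioi 0)) (nhds L) := by
  set L : ℝ := χ * (χ ^ 2 - 3) * phi χ / 6 with hL_def
  have hL : L < 0 := by
    have h1 : 0 < χ * phi χ := mul_pos hχ (phi_pos χ)
    nlinarith
  have hsq : Tendsto Real.sqrt (nhdsWithin 0 (Set.Ioi 0)) (nhdsWithin 0 (Set.Ioi 0)) := by
    rw [tendsto_nhdsWithin_iff]
    constructor
    · exact (Real.continuous_sqrt.tendsto' 0 0 Real.sqrt_zero).mono_left nhdsWithin_le_nhds
    · filter_upwards [self_mem_nhdsWithin] with b hb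
      exact Real.sqrt_pos.mpr hb
  have hGt : Tendsto (fun t => G χ (Real.sqrt t)) (nhdsWithin 0 (Set.Ioi 0)) (nhds L) :=
    (limG hχ).comp hsq
  have hmain : Tendsto (fun t => deriv (deriv (fun s => r0 s χ)) t)
      (nhdsWithin 0 (Set.Ioi 0)) (nhds L) := by
    refine hGt.congr' ?_
    filter_upwards [self_mem_nhdsWithin] with t ht
    exact (deriv_deriv_r0 χ ht).symm
  refine ⟨?_, L, hL, hmain⟩
  have hev : ∀ᶠ t in nhdsWithin 0 (Set.Ioi 0),
      deriv (deriv (fun s => r0 s χ)) t < 0 := hmain.eventually_lt_const hL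
  rw [eventually_iff_exists_mem] at hev
  obtain ⟨s, hs, hneg⟩ := hev
  rw [mem_nhdsGT_iff_exists_Ioc_subset] at hs
  obtain ⟨ε, hε, hsub⟩ := hs
  refine ⟨ε, hε, ?_⟩
  have hcont : Continuous fun t => r0 t χ := by
    have hPhi : Continuous Phi := by
      rw [continuous_iff_continuousAt]
      exact fun x => (hasDerivAt_Phi x).continuousAt
    have hr : Continuous fun b => r b χ :=
      (hPhi.comp (by continuity)).add (hPhi.comp (by continuity))
    exact hr.comp Real.continuous_sqrt
  refine strictConcaveOn_of_deriv2_neg (convex_Icc 0 ε) hcont.continuousOn ?_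
  intro x hx
  rw [interior_Icc] at hx
  have : deriv^[2] (fun t => r0 t χ) x = deriv (deriv (fun t => r0 t χ)) x := by
    simp [Function.iterate_succ, Function.iterate_zero, Function.comp_def]
  rw [this]
  exact hneg x (hsub ⟨hx.1, hx.2.le⟩)
end

section
/- Define ρ(m₂, χ) = sup{E_F[r(b, χ)] : F a probability measure on ℝ with E_F[b²] = m₂}. Then for each fixed m₂ > 0, ρ(m₂, ·) is weakly decreasing and continuous in χ on (0, ∞), with ρ(m₂, χ) → 0 as χ → ∞. -/
open MeasureTheory ProbabilityTheory Real Set Filter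

/-- Worst-case non-coverage over distributions with second moment `m₂`. -/
noncomputable def ρ (m₂ χ : ℝ) : ℝ :=
  sSup {x | ∃ F : Measure ℝ, IsProbabilityMeasure F ∧
    (∫ b, b ^ 2 ∂F) = m₂ ∧ (∫ b, r b χ ∂F) = x}

open NNReal

lemma Phi_eq_cdf (x : ℝ) : Phi x = cdf (gaussianReal 0 1) x :=
  (cdf_eq_real _ x).symm

lemma Phi_mono : Monotone Phi := by
  simp only [funext Phi_eq_cdf]
  exact monotone_cdf _

lemma Phi_nonneg (x : ℝ) : 0 ≤ Phi x := ENNReal.toReal_nonneg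

lemma Phi_le_one (x : ℝ) : Phi x ≤ 1 := by
  rw [Phi_eq_cdf]; exact cdf_le_one _ x

lemma Phi_tendsto_atBot : Tendsto Phi atBot (nhds 0) := by
  simp only [funext Phi_eq_cdf]
  exact tendsto_cdf_atBot _

lemma gaussianPDF_le_one (x : ℝ) : gaussianPDF 0 1 x ≤ 1 := by
  rw [gaussianPDF]
  refine ENNReal.ofReal_le_one.mpr ?_
  rw [gaussianPDFReal]
  have h1 : (1:ℝ) ≤ Real.sqrt (2 * Real.pi * (1:ℝ≥0)) := by
    rw [show ((1:ℝ≥0):ℝ) = 1 by norm_num, mul_one]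
    nlinarith [Real.sq_sqrt (by positivity : (0:ℝ) ≤ 2 * Real.pi), Real.sqrt_nonneg (2*Real.pi), Real.pi_gt_three]
  have h2 : Real.exp (-(x - 0)^2 / (2 * (1:ℝ≥0))) ≤ 1 := by
    rw [Real.exp_le_one_iff]
    have : (0:ℝ) ≤ (x - 0)^2 := sq_nonneg _
    have h2 : (0:ℝ) < 2 * (1:ℝ≥0) := by norm_num
    exact div_nonpos_of_nonpos_of_nonneg (by linarith) h2.le
  calc (Real.sqrt (2 * Real.pi * (1:ℝ≥0)))⁻¹ * Real.exp (-(x - 0)^2 / (2 * (1:ℝ≥0)))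
      ≤ 1 * 1 := by
        apply mul_le_mul _ h2 (Real.exp_nonneg _) zero_le_one
        exact inv_le_one_of_one_le₀ h1
    _ = 1 := by norm_num

lemma Phi_sub_le {a b : ℝ} (hab : a ≤ b) : Phi b - Phi a ≤ b - a := by
  have hmeas : gaussianReal 0 1 (Iic b) = gaussianReal 0 1 (Iic a) + gaussianReal 0 1 (Ioc a b) := by
    rw [← measure_union (Iic_disjoint_Ioc le_rfl) measurableSet_Ioc, Iic_union_Ioc_eq_Iic hab]
  have hioc : gaussianReal 0 1 (Ioc a b) ≤ ENNReal.ofReal (b - a) := by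
    rw [gaussianReal_apply 0 one_ne_zero]
    calc ∫⁻ x in Ioc a b, gaussianPDF 0 1 x ≤ ∫⁻ _ in Ioc a b, 1 :=
          lintegral_mono fun x => gaussianPDF_le_one x
      _ = volume (Ioc a b) := by simp
      _ = ENNReal.ofReal (b - a) := by rw [Real.volume_Ioc]
  have hne : gaussianReal 0 1 (Iic a) ≠ ⊤ := measure_ne_top _ _
  have hne2 : gaussianReal 0 1 (Ioc a b) ≠ ⊤ := measure_ne_top _ _
  rw [Phi, Phi, hmeas, ENNReal.toReal_add hne hne2]
  have := ENNReal.toReal_le_toReal hne2 (by simp) |>.mpr hioc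
  rw [ENNReal.toReal_ofReal (by linarith)] at this
  linarith

lemma Phi_lipschitz : LipschitzWith 1 Phi := by
  refine LipschitzWith.of_dist_le_mul fun a b => ?_
  rw [Real.dist_eq, Real.dist_eq, NNReal.coe_one, one_mul]
  rcases le_total a b with h | h
  · rw [abs_of_nonpos (by linarith [Phi_mono h] : Phi a - Phi b ≤ 0),
      abs_of_nonpos (by linarith)]
    linarith [Phi_sub_le h]
  · rw [abs_of_nonneg (by linarith [Phi_mono h] : 0 ≤ Phi a - Phi b),
      abs_of_nonneg (by linarith)]
    linarith [Phi_sub_le h]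

lemma Phi_continuous : Continuous Phi := Phi_lipschitz.continuous

lemma r_nonneg (b χ : ℝ) : 0 ≤ r b χ := add_nonneg (Phi_nonneg _) (Phi_nonneg _)

lemma r_le_two (b χ : ℝ) : r b χ ≤ 2 := by
  have := Phi_le_one (-χ - b); have := Phi_le_one (-χ + b); rw [r]; linarith

lemma r_continuous (χ : ℝ) : Continuous (fun b => r b χ) := by
  apply Continuous.add <;> exact Phi_continuous.comp (by continuity)

lemma r_anti (b χ₁ χ₂ : ℝ) (h : χ₁ ≤ χ₂) : r b χ₂ ≤ r b χ₁ :=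
  add_le_add (Phi_mono (by linarith)) (Phi_mono (by linarith))

lemma r_lip (b χ₁ χ₂ : ℝ) : r b χ₁ ≤ r b χ₂ + 2 * |χ₁ - χ₂| := by
  have h1 := Phi_lipschitz.dist_le_mul (-χ₁ - b) (-χ₂ - b)
  have h2 := Phi_lipschitz.dist_le_mul (-χ₁ + b) (-χ₂ + b)
  simp only [Real.dist_eq, NNReal.coe_one, one_mul] at h1 h2
  have e1 : |-χ₁ - b - (-χ₂ - b)| = |χ₁ - χ₂| := by rw [abs_sub_comm]; congr 1; ring
  have e2 : |-χ₁ + b - (-χ₂ + b)| = |χ₁ - χ₂| := by rw [abs_sub_comm]; congr 1; ring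
  rw [e1] at h1; rw [e2] at h2
  rw [r, r]
  linarith [(abs_le.mp h1).2, (abs_le.mp h2).2]

lemma r_tail_bound {χ : ℝ} (hχ : 0 < χ) (b : ℝ) :
    r b χ ≤ 2 * Phi (-χ / 2) + 8 * b ^ 2 / χ ^ 2 := by
  rcases le_or_gt |b| (χ / 2) with h | h
  · have hb := abs_le.mp h
    have l1 : Phi (-χ - b) ≤ Phi (-χ / 2) := Phi_mono (by linarith)
    have l2 : Phi (-χ + b) ≤ Phi (-χ / 2) := Phi_mono (by linarith)
    have : (0:ℝ) ≤ 8 * b ^ 2 / χ ^ 2 := by positivity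
    rw [r]; linarith
  · have h2 : χ ^ 2 / 4 < b ^ 2 := by
      have := sq_abs b ▸ pow_lt_pow_left₀ h (by positivity) two_ne_zero
      nlinarith [abs_nonneg b]
    have : (2:ℝ) ≤ 8 * b ^ 2 / χ ^ 2 := by
      rw [le_div_iff₀ (by positivity)]; nlinarith
    have := Phi_nonneg (-χ / 2)
    linarith [r_le_two b χ]

def S (m₂ χ : ℝ) : Set ℝ := {x | ∃ F : Measure ℝ, IsProbabilityMeasure F ∧
    (∫ b, b ^ 2 ∂F) = m₂ ∧ (∫ b, r b χ ∂F) = x}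

lemma rho_eq (m₂ χ : ℝ) : ρ m₂ χ = sSup (S m₂ χ) := rfl

lemma integrable_r (χ : ℝ) (F : Measure ℝ) [IsProbabilityMeasure F] :
    Integrable (fun b => r b χ) F := by
  refine Integrable.mono' (integrable_const 2) (r_continuous χ).aestronglyMeasurable
    (ae_of_all _ fun b => ?_)
  rw [Real.norm_eq_abs, abs_of_nonneg (r_nonneg b χ)]
  exact r_le_two b χ

lemma mem_S {m₂ : ℝ} (hm : 0 ≤ m₂) (χ : ℝ) : r (Real.sqrt m₂) χ ∈ S m₂ χ := by
  refine ⟨Measure.dirac (Real.sqrt m₂), inferInstance, ?_, ?_⟩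
  · rw [integral_dirac]; exact Real.sq_sqrt hm
  · rw [integral_dirac]

lemma S_nonempty {m₂ : ℝ} (hm : 0 ≤ m₂) (χ : ℝ) : (S m₂ χ).Nonempty :=
  ⟨_, mem_S hm χ⟩

lemma S_le_two (m₂ χ : ℝ) : ∀ x ∈ S m₂ χ, x ≤ 2 := by
  rintro x ⟨F, hF, _, rfl⟩
  calc ∫ b, r b χ ∂F ≤ ∫ _, (2:ℝ) ∂F :=
        integral_mono (integrable_r χ F) (integrable_const 2) (fun b => r_le_two b χ)
    _ = 2 := by simp
lemma S_bddAbove (m₂ χ : ℝ) : BddAbove (S m₂ χ) := ⟨2, fun x hx => S_le_two m₂ χ x hx⟩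

lemma rho_nonneg {m₂ : ℝ} (hm : 0 ≤ m₂) (χ : ℝ) : 0 ≤ ρ m₂ χ :=
  (r_nonneg _ χ).trans (le_csSup (S_bddAbove m₂ χ) (mem_S hm χ))

lemma rho_anti {m₂ : ℝ} (hm : 0 ≤ m₂) {χ₁ χ₂ : ℝ} (h : χ₁ ≤ χ₂) : ρ m₂ χ₂ ≤ ρ m₂ χ₁ := by
  rw [rho_eq, rho_eq]
  refine csSup_le (S_nonempty hm χ₂) ?_
  rintro x ⟨F, hF, hmF, rfl⟩
  calc ∫ b, r b χ₂ ∂F ≤ ∫ b, r b χ₁ ∂F :=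
        integral_mono (integrable_r _ F) (integrable_r _ F) (fun b => r_anti b χ₁ χ₂ h)
    _ ≤ sSup (S m₂ χ₁) := le_csSup (S_bddAbove m₂ χ₁) ⟨F, hF, hmF, rfl⟩

lemma rho_lip {m₂ : ℝ} (hm : 0 ≤ m₂) (χ₁ χ₂ : ℝ) :
    ρ m₂ χ₁ ≤ ρ m₂ χ₂ + 2 * |χ₁ - χ₂| := by
  rw [rho_eq, rho_eq]
  refine csSup_le (S_nonempty hm χ₁) ?_
  rintro x ⟨F, hF, hmF, rfl⟩
  calc ∫ b, r b χ₁ ∂F ≤ ∫ b, (r b χ₂ + 2 * |χ₁ - χ₂|) ∂F :=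
        integral_mono (integrable_r _ F) ((integrable_r _ F).add (integrable_const _))
          (fun b => r_lip b χ₁ χ₂)
    _ = (∫ b, r b χ₂ ∂F) + 2 * |χ₁ - χ₂| := by
        rw [integral_add (integrable_r _ F) (integrable_const _)]; simp
    _ ≤ sSup (S m₂ χ₂) + 2 * |χ₁ - χ₂| :=
        add_le_add_left (le_csSup (S_bddAbove m₂ χ₂) ⟨F, hF, hmF, rfl⟩) _

lemma rho_tail {m₂ : ℝ} (hm : 0 < m₂) {χ : ℝ} (hχ : 0 < χ) :
    ρ m₂ χ ≤ 2 * Phi (-χ / 2) + 8 * m₂ / χ ^ 2 := by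
  rw [rho_eq]
  refine csSup_le (S_nonempty hm.le χ) ?_
  rintro x ⟨F, hF, hmF, rfl⟩
  have hint : Integrable (fun b => b ^ 2) F := by
    by_contra h
    rw [integral_undef h] at hmF
    linarith
  have heq : (fun b : ℝ => 2 * Phi (-χ / 2) + 8 * b ^ 2 / χ ^ 2)
      = fun b => 2 * Phi (-χ / 2) + (8 / χ ^ 2) * b ^ 2 := by funext b; ring
  calc ∫ b, r b χ ∂F ≤ ∫ b, (2 * Phi (-χ / 2) + 8 * b ^ 2 / χ ^ 2) ∂F := by
        refine integral_mono (integrable_r _ F) ?_ (fun b => r_tail_bound hχ b)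
        rw [heq]
        exact (integrable_const _).add (hint.const_mul _)
    _ = 2 * Phi (-χ / 2) + 8 * m₂ / χ ^ 2 := by
        rw [heq, integral_add (integrable_const _) (hint.const_mul _),
          integral_const, integral_const_mul, hmF]
        simp only [probReal_univ, smul_eq_mul, one_mul]
        ring


/-- For fixed `m₂ > 0`, `ρ(m₂, ·)` is weakly decreasing and continuous on `(0, ∞)`,
and tends to `0` as `χ → ∞`. -/
theorem rho_antitone_continuous (m₂ : ℝ) (hm : 0 < m₂) :
    AntitoneOn (fun χ => ρ m₂ χ) (Set.Ioi 0) ∧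
    ContinuousOn (fun χ => ρ m₂ χ) (Set.Ioi 0) ∧
    Filter.Tendsto (fun χ => ρ m₂ χ) Filter.atTop (nhds 0) := by
  refine ⟨fun χ₁ _ χ₂ _ h => rho_anti hm.le h, ?_, ?_⟩
  · have hlip : LipschitzWith 2 (fun χ => ρ m₂ χ) := by
      refine LipschitzWith.of_dist_le_mul fun χ₁ χ₂ => ?_
      rw [Real.dist_eq, Real.dist_eq]
      push_cast
      have h1 := rho_lip hm.le χ₁ χ₂
      have h2 := rho_lip hm.le χ₂ χ₁
      rw [abs_sub_comm χ₂ χ₁] at h2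
      rw [abs_sub_le_iff]
      constructor <;> [linarith; linarith]
    exact hlip.continuous.continuousOn
  · have hg : Tendsto (fun χ : ℝ => 2 * Phi (-χ / 2) + 8 * m₂ / χ ^ 2) atTop (nhds 0) := by
      have h1 : Tendsto (fun χ : ℝ => -χ / 2) atTop atBot := by
        apply Tendsto.atBot_div_const two_pos
        exact tendsto_neg_atBot_iff.mpr tendsto_id
      have h2 : Tendsto (fun χ : ℝ => 2 * Phi (-χ / 2)) atTop (nhds 0) := by
        have := (Phi_tendsto_atBot.comp h1).const_mul (2:ℝ)
        simpa using this
      have h3 : Tendsto (fun χ : ℝ => 8 * m₂ / χ ^ 2) atTop (nhds 0) :=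
        Tendsto.div_atTop tendsto_const_nhds (tendsto_pow_atTop two_ne_zero)
      simpa using h2.add h3
    refine tendsto_of_tendsto_of_tendsto_of_le_of_le' tendsto_const_nhds hg ?_ ?_
    · exact Eventually.of_forall fun χ => rho_nonneg hm.le χ
    · filter_upwards [eventually_gt_atTop (0:ℝ)] with χ hχ
      exact rho_tail hm hχ
end
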